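/- Median-preserving transfers decrease the quantile inequality coefficients: if F, F_Y are CDFs with equal medians m and F_Y(y) ≤ F(y) for y < m, F_Y(y) ≥ F(y) for y > m, then Q_{F_Y}(p) ≥ Q_F(p) for p < 1/2 and Q_{F_Y}(p) ≤ Q_F(p) for p > 1/2; consequently L₁(F;p) ≤ L₁(F_Y;p) for all p ∈ (0,1), and hence G₁(F) ≥ G₁(F_Y). -/
import Mathlib


open Set MeasureTheory

/-- The quantile function of a CDF `F`. -/
noncomputable def quant (F : ℝ → ℝ) (p : ℝ) : ℝ := sInf {x : ℝ | p ≤ F x}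

/-- The quantile inequality curve `L₁` of a CDF `F`. -/
noncomputable def L1curve (F : ℝ → ℝ) (p : ℝ) : ℝ :=
  p * quant F (p / 2) / quant F (1 / 2)

/-- The inequality coefficient `G₁` of a CDF `F`. -/
noncomputable def G1coef (F : ℝ → ℝ) : ℝ := 2 * ∫ p in (0 : ℝ)..1, (p - L1curve F p)

lemma quant_nonempty {F : ℝ → ℝ} {p : ℝ} (h : 0 < quant F p) :
    {x : ℝ | p ≤ F x}.Nonempty := by
  by_contra hne
  rw [Set.not_nonempty_iff_eq_empty] at hne
  rw [quant, hne, Real.sInf_empty] at h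
  exact lt_irrefl 0 h

lemma quant_bddBelow {F : ℝ → ℝ} {p : ℝ} (h : 0 < quant F p) :
    BddBelow {x : ℝ | p ≤ F x} := by
  by_contra hb
  rw [quant, Real.sInf_of_not_bddBelow hb] at h
  exact lt_irrefl 0 h

lemma quant_mono {F : ℝ → ℝ} {a b : ℝ} (hab : a ≤ b)
    (ha : 0 < quant F a) (hb : 0 < quant F b) : quant F a ≤ quant F b := by
  apply csInf_le_csInf (quant_bddBelow ha) (quant_nonempty hb)
  intro x hx
  exact le_trans hab hx

lemma g_monotoneOn (F : ℝ → ℝ) (hQFpos : ∀ p ∈ Set.Ioo (0 : ℝ) 1, 0 < quant F p) :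
    MonotoneOn (fun p => p * quant F (p / 2)) (Set.Icc (0 : ℝ) 1) := by
  have key : ∀ p ∈ Set.Icc (0:ℝ) 1, 0 < p → 0 < quant F (p / 2) := by
    intro p hp hp0
    exact hQFpos (p / 2) ⟨by linarith, by nlinarith [hp.2]⟩
  intro p hp p' hp' hpp'
  rcases hp.1.eq_or_lt with h0 | h0
  · simp only [← h0, zero_mul]
    rcases hp'.1.eq_or_lt with h0' | h0'
    · simp [← h0']
    · exact mul_nonneg h0'.le (key p' hp' h0').le
  · have h0' : 0 < p' := lt_of_lt_of_le h0 hpp'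
    have hq := key p hp h0
    have hq' := key p' hp' h0'
    exact mul_le_mul hpp' (quant_mono (by linarith) hq hq') hq.le h0'.le

lemma integrand_intervalIntegrable (F : ℝ → ℝ) (m : ℝ)
    (hmF : quant F (1 / 2) = m)
    (hQFpos : ∀ p ∈ Set.Ioo (0 : ℝ) 1, 0 < quant F p) :
    IntervalIntegrable (fun p => p - L1curve F p) volume 0 1 := by
  rw [intervalIntegrable_iff_integrableOn_Icc_of_le (by norm_num)]
  have hg : IntegrableOn (fun p => p * quant F (p / 2)) (Set.Icc (0:ℝ) 1) volume :=
    (g_monotoneOn F hQFpos).integrableOn_isCompact isCompact_Icc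
  have hid : IntegrableOn (fun p : ℝ => p) (Set.Icc (0:ℝ) 1) volume :=
    continuous_id.integrableOn_Icc
  have : (fun p => p - L1curve F p)
      = fun p => p - (p * quant F (p / 2)) / m := by
    funext p
    rw [L1curve, hmF]
  rw [this]
  exact hid.sub (hg.div_const m)

/-- A median-preserving transfer decreases `G₁`: if `F, F_Y` have common median `m > 0`
with `F_Y ≤ F` below `m` and `F_Y ≥ F` above `m`, then the quantiles satisfy
`Q_{F_Y}(p) ≥ Q_F(p)` for `p < 1/2` and `Q_{F_Y}(p) ≤ Q_F(p)` for `p > 1/2`;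
consequently `L₁(F;p) ≤ L₁(F_Y;p)` on `(0,1)`, and hence `G₁(F) ≥ G₁(F_Y)`. -/
theorem stmt_8 (F FY : ℝ → ℝ) (hFmono : Monotone F) (hFYmono : Monotone FY)
    (m : ℝ) (hm0 : 0 < m) (hmF : quant F (1 / 2) = m) (hmFY : quant FY (1 / 2) = m)
    (hbelow : ∀ y < m, FY y ≤ F y) (habove : ∀ y > m, F y ≤ FY y)
    (hQFpos : ∀ p ∈ Set.Ioo (0 : ℝ) 1, 0 < quant F p)
    (hQFYpos : ∀ p ∈ Set.Ioo (0 : ℝ) 1, 0 < quant FY p) :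
    (∀ p ∈ Set.Ioo (0 : ℝ) (1 / 2), quant F p ≤ quant FY p) ∧
    (∀ p ∈ Set.Ioo (1 / 2 : ℝ) 1, quant FY p ≤ quant F p) ∧
    (∀ p ∈ Set.Ioo (0 : ℝ) 1, L1curve F p ≤ L1curve FY p) ∧
    G1coef FY ≤ G1coef F := by
  have hmFpos : 0 < quant F (1 / 2) := hmF ▸ hm0
  have hmFYpos : 0 < quant FY (1 / 2) := hmFY ▸ hm0
  have claim1 : ∀ p ∈ Set.Ioo (0 : ℝ) (1 / 2), quant F p ≤ quant FY p := by
    intro p hp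
    have hposF : 0 < quant F p := hQFpos p ⟨hp.1, by linarith [hp.2]⟩
    have hposFY : 0 < quant FY p := hQFYpos p ⟨hp.1, by linarith [hp.2]⟩
    apply le_csInf (quant_nonempty hposFY)
    intro x hx
    rcases lt_or_ge x m with hxm | hxm
    · exact csInf_le (quant_bddBelow hposF) (le_trans hx (hbelow x hxm))
    · have : quant F p ≤ quant F (1 / 2) := quant_mono hp.2.le hposF hmFpos
      rw [hmF] at this
      linarith
  have claim2 : ∀ p ∈ Set.Ioo (1 / 2 : ℝ) 1, quant FY p ≤ quant F p := by
    intro p hp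
    have hposF : 0 < quant F p := hQFpos p ⟨by linarith [hp.1], hp.2⟩
    have hposFY : 0 < quant FY p := hQFYpos p ⟨by linarith [hp.1], hp.2⟩
    apply le_csInf (quant_nonempty hposF)
    intro x hx
    rcases lt_or_ge m x with hxm | hxm
    · exact csInf_le (quant_bddBelow hposFY) (le_trans hx (habove x hxm))
    · -- x ≤ m; then m ≤ x since 1/2 ≤ F x, so x = m
      have hmx : m ≤ x := by
        rw [← hmF]
        exact csInf_le (quant_bddBelow hmFpos) (le_trans hp.1.le hx)
      have hxe : x = m := le_antisymm hxm hmx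
      -- every y > m is in the FY set
      have hmem : ∀ y > m, y ∈ {z : ℝ | p ≤ FY z} := by
        intro y hy
        have : F x ≤ FY y := le_trans (hFmono (by rw [hxe]; exact hy.le)) (habove y hy)
        exact le_trans hx this
      by_contra hcon
      push_neg at hcon
      rw [hxe] at hcon
      set y := (m + quant FY p) / 2 with hy
      have hy1 : m < y := by rw [hy]; linarith
      have hy2 : y < quant FY p := by rw [hy]; linarith
      exact absurd (csInf_le (quant_bddBelow hposFY) (hmem y hy1)) (not_le.mpr hy2)
  have claim3 : ∀ p ∈ Set.Ioo (0 : ℝ) 1, L1curve F p ≤ L1curve FY p := by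
    intro p hp
    have hhalf : p / 2 ∈ Set.Ioo (0 : ℝ) (1 / 2) := ⟨by linarith [hp.1], by linarith [hp.2]⟩
    have hq := claim1 (p / 2) hhalf
    rw [L1curve, L1curve, hmF, hmFY]
    have hp0 : (0:ℝ) ≤ p := hp.1.le
    gcongr
  refine ⟨claim1, claim2, claim3, ?_⟩
  rw [G1coef, G1coef]
  have hintF := integrand_intervalIntegrable F m hmF hQFpos
  have hintFY := integrand_intervalIntegrable FY m hmFY hQFYpos
  have hpt : ∀ x ∈ Set.Icc (0:ℝ) 1, x - L1curve FY x ≤ x - L1curve F x := by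
    intro x hx
    have : L1curve F x ≤ L1curve FY x := by
      rcases hx.1.eq_or_lt with h0 | h0
      · simp [← h0, L1curve]
      · rcases hx.2.lt_or_eq with h1 | h1
        · exact claim3 x ⟨h0, h1⟩
        · have hF1 : L1curve F 1 = 1 := by
            rw [L1curve, one_mul, div_self (by rw [hmF]; exact hm0.ne')]
          have hFY1 : L1curve FY 1 = 1 := by
            rw [L1curve, one_mul, div_self (by rw [hmFY]; exact hm0.ne')]
          rw [h1, hF1, hFY1]
    linarith
  have := intervalIntegral.integral_mono_on (by norm_num : (0:ℝ) ≤ 1) hintFY hintF hpt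
  linarith
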